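/- Let X be a DG B^e-module with XJ = 0 (i.e., X is a DG B-module via B ≅ B^e/J). Then there is an isomorphism Der_A(B, X) ≅ Hom_B(Ω, X) of topological DG B-modules, where Ω = J/J². -/

import Mathlib

/- ------------------------------------------------------------------
A self-contained framework for differential graded (DG) homological
algebra, following Nasseh–Ono–Yoshino, "Connections and naïve lifting
of DG modules".
------------------------------------------------------------------ -/

noncomputable section

namespace DG

universe u

/-- The sign `(-1)^n` for `n : ℤ`. -/
def sgn (n : ℤ) : ℤ := ((-1 : ℤˣ) ^ n : ℤˣ)

/-- A (non-negatively graded, strictly graded-commutative) DG `R`-algebra: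
a graded `R`-algebra `A = ⊕_{n ≥ 0} A_n` with `ab = (-1)^{|a||b|} ba`,
`a² = 0` for `|a|` odd, and a degree `-1` differential `d` with `d ∘ d = 0`
satisfying the Leibniz rule. -/
structure DGAlg (R : Type u) [CommRing R] : Type (u + 1) where
  carrier : Type u
  [ring : Ring carrier]
  [alg : Algebra R carrier]
  gr : ℤ → Submodule R carrier
  internal : DirectSum.IsInternal gr
  nonneg : ∀ i : ℤ, i < 0 → gr i = ⊥
  one_mem : (1 : carrier) ∈ gr 0
  mul_mem : ∀ {i j : ℤ} {a b : carrier}, a ∈ gr i → b ∈ gr j → a * b ∈ gr (i + j)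
  gcomm : ∀ {i j : ℤ} {a b : carrier}, a ∈ gr i → b ∈ gr j → a * b = sgn (i * j) • (b * a)
  sq_zero : ∀ {i : ℤ} {a : carrier}, a ∈ gr i → Odd i → a * a = 0
  d : carrier →ₗ[R] carrier
  d_mem : ∀ {i : ℤ} {a : carrier}, a ∈ gr i → d a ∈ gr (i - 1)
  d_d : ∀ a : carrier, d (d a) = 0
  leibniz : ∀ {i : ℤ} {a : carrier} (b : carrier), a ∈ gr i →
    d (a * b) = d a * b + sgn i • (a * d b)

attribute [instance] DGAlg.ring DGAlg.alg

variable {R : Type u} [CommRing R]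

/-- A right DG module over a DG `R`-algebra `S`. -/
structure DGMod (S : DGAlg R) : Type (u + 1) where
  carrier : Type u
  [acg : AddCommGroup carrier]
  [mod : Module R carrier]
  /-- the right `S`-action -/
  smul : carrier → S.carrier → carrier
  smul_add : ∀ (m : carrier) (a b : S.carrier), smul m (a + b) = smul m a + smul m b
  add_smul : ∀ (m n : carrier) (a : S.carrier), smul (m + n) a = smul m a + smul n a
  smul_rsmul : ∀ (r : R) (m : carrier) (a : S.carrier), smul (r • m) a = r • smul m a
  smul_one : ∀ m : carrier, smul m 1 = m
  smul_mul : ∀ (m : carrier) (a b : S.carrier), smul m (a * b) = smul (smul m a) b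
  smul_algebraMap : ∀ (r : R) (m : carrier), smul m (algebraMap R S.carrier r) = r • m
  gr : ℤ → Submodule R carrier
  internal : DirectSum.IsInternal gr
  smul_mem : ∀ {i j : ℤ} {m : carrier} {a : S.carrier},
    m ∈ gr i → a ∈ S.gr j → smul m a ∈ gr (i + j)
  d : carrier →ₗ[R] carrier
  d_mem : ∀ {i : ℤ} {m : carrier}, m ∈ gr i → d m ∈ gr (i - 1)
  d_d : ∀ m : carrier, d (d m) = 0
  leibniz : ∀ {i : ℤ} {m : carrier} (a : S.carrier), m ∈ gr i →
    d (smul m a) = smul (d m) a + sgn i • smul m (S.d a)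

attribute [instance] DGMod.acg DGMod.mod

/-- Decomposition of a DG algebra into its homogeneous components. -/
noncomputable def DGAlg.dec (S : DGAlg R) : S.carrier ≃ DirectSum ℤ (fun i => S.gr i) :=
  (Equiv.ofBijective _ S.internal).symm

/-- Decomposition of a DG module into its homogeneous components. -/
noncomputable def DGMod.dec {S : DGAlg R} (M : DGMod S) :
    M.carrier ≃ DirectSum ℤ (fun i => M.gr i) :=
  (Equiv.ofBijective _ M.internal).symm

/-- The left action `a • x := (-1)^{|a||x|} x a` on a right DG module over the
strictly graded-commutative DG algebra `S`, extended bilinearly. -/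
noncomputable def DGMod.lsmul {S : DGAlg R} (M : DGMod S) (a : S.carrier) (x : M.carrier) :
    M.carrier :=
  (DFinsupp.sumAddHom (fun i => AddMonoidHom.mk'
    (fun ai : S.gr i => DFinsupp.sumAddHom (fun j => AddMonoidHom.mk'
      (fun xj : M.gr j => sgn (i * j) • M.smul (xj : M.carrier) (ai : S.carrier))
      (by intro x y; simp [M.add_smul, smul_add]))
    )
    (by
      intro ai ai'
      refine DFinsupp.addHom_ext fun j xj => ?_
      simp [DFinsupp.sumAddHom_single, M.smul_add, smul_add]))
    (S.dec a)) (M.dec x)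

/-- `f : M → N` is a graded `S`-linear map of degree `n`. -/
def IsGLin {S : DGAlg R} (M N : DGMod S) (n : ℤ) (f : M.carrier → N.carrier) : Prop :=
  (∀ x y : M.carrier, f (x + y) = f x + f y) ∧
  (∀ (r : R) (x : M.carrier), f (r • x) = r • f x) ∧
  (∀ (x : M.carrier) (a : S.carrier), f (M.smul x a) = N.smul (f x) a) ∧
  (∀ i : ℤ, ∀ x ∈ M.gr i, f x ∈ N.gr (i + n))

/-- `f` belongs to `Hom_S(M,N) = ⊕_{n ∈ ℤ} Hom_{gr(S)}(M, N(n))`, i.e. `f` is a finite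
sum of homogeneous graded `S`-linear maps. -/
def InSHom {S : DGAlg R} (M N : DGMod S) (f : M.carrier → N.carrier) : Prop :=
  ∃ (s : Finset ℤ) (g : ℤ → M.carrier → N.carrier),
    (∀ n ∈ s, IsGLin M N n (g n)) ∧ ∀ x, f x = ∑ n ∈ s, g n x

/-- A homomorphism of DG `R`-algebras. -/
structure DGHom (S T : DGAlg R) : Type u where
  toFun : S.carrier → T.carrier
  map_one : toFun 1 = 1
  map_mul : ∀ a b, toFun (a * b) = toFun a * toFun b
  map_add : ∀ a b, toFun (a + b) = toFun a + toFun b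
  map_algebraMap : ∀ r : R, toFun (algebraMap R S.carrier r) = algebraMap R T.carrier r
  map_gr : ∀ {i : ℤ} {a : S.carrier}, a ∈ S.gr i → toFun a ∈ T.gr i
  map_d : ∀ a, toFun (S.d a) = T.d (toFun a)

/-- The underlying ring homomorphism of a DG algebra homomorphism. -/
def DGHom.toRingHom {S T : DGAlg R} (f : DGHom S T) : S.carrier →+* T.carrier where
  toFun := f.toFun
  map_one' := f.map_one
  map_mul' := f.map_mul
  map_zero' := by
    have h := f.map_add 0 0
    rw [add_zero] at h
    exact (add_eq_left.mp h.symm)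
  map_add' := f.map_add

/-- The basic setup of the paper: a DG `R`-algebra homomorphism `φ : A → B` with `B`
projective as an underlying (graded) `A`-module, together with the enveloping DG algebra
`E = Bᵉ = B ⊗_A B` (axiomatized by its structure maps `inl : b ↦ b ⊗ 1`,
`inr : b ↦ 1 ⊗ b`, the multiplication map `mulB = π_B : Bᵉ → B` and the universal
property of the tensor product), the diagonal ideal `J = ker π_B` (a DG `Bᵉ`-module
with structure monomorphism `ιJ`), and the universal derivation
`δ : B → J`, `δ(b) = b ⊗ 1 - 1 ⊗ b`. -/
structure EnvSetup (R : Type u) [CommRing R] : Type (u + 1) where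
  A : DGAlg R
  B : DGAlg R
  φ : DGHom A B
  projB :
    letI : Module A.carrier B.carrier := Module.compHom B.carrier φ.toRingHom
    Module.Projective A.carrier B.carrier
  E : DGAlg R
  inl : DGHom B E
  inr : DGHom B E
  inl_inr_phi : ∀ a : A.carrier, inl.toFun (φ.toFun a) = inr.toFun (φ.toFun a)
  mulB : DGHom E B
  mulB_inl : ∀ b, mulB.toFun (inl.toFun b) = b
  mulB_inr : ∀ b, mulB.toFun (inr.toFun b) = b
  span : ∀ x : E.carrier,
    x ∈ Submodule.span R {y : E.carrier | ∃ b b', y = inl.toFun b * inr.toFun b'}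
  univ : ∀ (Q : Type u) [AddCommGroup Q] [Module R Q] (h : B.carrier → B.carrier → Q),
    (∀ b₁ b₂ b', h (b₁ + b₂) b' = h b₁ b' + h b₂ b') →
    (∀ b b₁ b₂, h b (b₁ + b₂) = h b b₁ + h b b₂) →
    (∀ (r : R) b b', h (r • b) b' = r • h b b') →
    (∀ (r : R) b b', h b (r • b') = r • h b b') →
    (∀ (a : A.carrier) (b b' : B.carrier), h (b * φ.toFun a) b' = h b (φ.toFun a * b')) →
    ∃! H : E.carrier →ₗ[R] Q, ∀ b b', H (inl.toFun b * inr.toFun b') = h b b'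
  J : DGMod E
  ιJ : J.carrier → E.carrier
  ιJ_add : ∀ x y, ιJ (x + y) = ιJ x + ιJ y
  ιJ_rsmul : ∀ (r : R) x, ιJ (r • x) = r • ιJ x
  ιJ_smul : ∀ x e, ιJ (J.smul x e) = ιJ x * e
  ιJ_gr : ∀ (i : ℤ) (x : J.carrier), x ∈ J.gr i ↔ ιJ x ∈ E.gr i
  ιJ_d : ∀ x, ιJ (J.d x) = E.d (ιJ x)
  ιJ_inj : Function.Injective ιJ
  ιJ_range : ∀ e : E.carrier, (∃ x, ιJ x = e) ↔ mulB.toFun e = 0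
  δ : B.carrier → J.carrier
  ιJ_δ : ∀ b, ιJ (δ b) = inl.toFun b - inr.toFun b

/-- `D : B → X` is an `A`-derivation of degree `n` with values in the DG `Bᵉ`-module `X`:
an `A`-linear graded map of degree `n` satisfying the Leibniz rule
`D(bc) = D(b)·(1⊗c) + (-1)^{|b||c|} D(c)·(b⊗1)`
(equivalently, `D(bc) = D(b)c + (-1)^{|D||b|} b D(c)`). -/
def IsDer (P : EnvSetup R) (X : DGMod P.E) (n : ℤ) (D : P.B.carrier → X.carrier) : Prop :=
  (∀ b c, D (b + c) = D b + D c) ∧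
  (∀ (r : R) b, D (r • b) = r • D b) ∧
  (∀ (b : P.B.carrier) (a : P.A.carrier),
    D (b * P.φ.toFun a) = X.smul (D b) (P.inr.toFun (P.φ.toFun a))) ∧
  (∀ i : ℤ, ∀ b ∈ P.B.gr i, D b ∈ X.gr (i + n)) ∧
  (∀ (i j : ℤ) (b c : P.B.carrier), b ∈ P.B.gr i → c ∈ P.B.gr j →
    D (b * c) = X.smul (D b) (P.inr.toFun c) + sgn (i * j) • X.smul (D c) (P.inl.toFun b))

/-- `D` belongs to `Der_A(B,X) = ⊕_{n ∈ ℤ} Der_A(B,X)_n`. -/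
def InSDer (P : EnvSetup R) (X : DGMod P.E) (D : P.B.carrier → X.carrier) : Prop :=
  ∃ (s : Finset ℤ) (g : ℤ → P.B.carrier → X.carrier),
    (∀ n ∈ s, IsDer P X n (g n)) ∧ ∀ b, D b = ∑ n ∈ s, g n b

end DG
/- Part 2 appended to common -/
namespace DG

variable {R : Type u} [CommRing R]

/-- The DG tensor product `N ⊗_B X` of a DG `B`-module `N` and a DG `Bᵉ`-module `X`
(a DG `B`-module via the right `B`-action on `X` through `inr`), axiomatized by its
structure map `t : (n,x) ↦ n ⊗ x`, `B`-balancedness `nb ⊗ x = (-1)^{|b||x|} n ⊗ x·(b⊗1)`,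
spanning, and the universal property. -/
structure TensorBX (P : EnvSetup R) (N : DGMod P.B) (X : DGMod P.E) : Type (u + 1) where
  T : DGMod P.B
  t : N.carrier → X.carrier → T.carrier
  t_addl : ∀ m m' x, t (m + m') x = t m x + t m' x
  t_addr : ∀ m x x', t m (x + x') = t m x + t m x'
  t_rsml : ∀ (r : R) m x, t (r • m) x = r • t m x
  t_rsmr : ∀ (r : R) m x, t m (r • x) = r • t m x
  t_smul : ∀ m x b, t m (X.smul x (P.inr.toFun b)) = T.smul (t m x) b
  t_bal : ∀ {i j : ℤ} (m : N.carrier) (x : X.carrier) (b : P.B.carrier),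
    b ∈ P.B.gr i → x ∈ X.gr j →
    t (N.smul m b) x = sgn (i * j) • t m (X.smul x (P.inl.toFun b))
  t_gr : ∀ {i j : ℤ} {m x}, m ∈ N.gr i → x ∈ X.gr j → t m x ∈ T.gr (i + j)
  t_d : ∀ {i : ℤ} (m x), m ∈ N.gr i → T.d (t m x) = t (N.d m) x + sgn i • t m (X.d x)
  span : ∀ y : T.carrier, y ∈ Submodule.span R {z : T.carrier | ∃ m x, z = t m x}
  univ : ∀ (Q : Type u) [AddCommGroup Q] [Module R Q] (h : N.carrier → X.carrier → Q),
    (∀ m m' x, h (m + m') x = h m x + h m' x) →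
    (∀ m x x', h m (x + x') = h m x + h m x') →
    (∀ (r : R) m x, h (r • m) x = r • h m x) →
    (∀ (r : R) m x, h m (r • x) = r • h m x) →
    (∀ {i j : ℤ} (m x) (b : P.B.carrier), b ∈ P.B.gr i → x ∈ X.gr j →
      h (N.smul m b) x = sgn (i * j) • h m (X.smul x (P.inl.toFun b))) →
    ∃! H : T.carrier →ₗ[R] Q, ∀ m x, H (t m x) = h m x

/-- `ψ : N → N ⊗_B X` is a `D`-connection on `N` along `X` of degree `n = |D|`:
a graded `A`-linear map of degree `n` with
`ψ(xb) = ψ(x)b + (-1)^{|D||x|} x ⊗ D(b)`. -/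
def IsConn {P : EnvSetup R} {N : DGMod P.B} {X : DGMod P.E} (τ : TensorBX P N X)
    (n : ℤ) (D : P.B.carrier → X.carrier) (ψ : N.carrier → τ.T.carrier) : Prop :=
  (∀ x y : N.carrier, ψ (x + y) = ψ x + ψ y) ∧
  (∀ (r : R) (x : N.carrier), ψ (r • x) = r • ψ x) ∧
  (∀ i : ℤ, ∀ x ∈ N.gr i, ψ x ∈ τ.T.gr (i + n)) ∧
  (∀ (i : ℤ) (x : N.carrier) (b : P.B.carrier), x ∈ N.gr i →
    ψ (N.smul x b) = τ.T.smul (ψ x) b + sgn (n * i) • τ.t x (D b))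

/-- `ψ` belongs to `Conn(N, N ⊗_B X) = ⊕_{n ∈ ℤ} Conn(N, N ⊗_B X)_n`. -/
def InSConn {P : EnvSetup R} {N : DGMod P.B} {X : DGMod P.E} (τ : TensorBX P N X)
    (ψ : N.carrier → τ.T.carrier) : Prop :=
  ∃ (s : Finset ℤ) (g : ℤ → N.carrier → τ.T.carrier) (Df : ℤ → P.B.carrier → X.carrier),
    (∀ n ∈ s, IsDer P X n (Df n) ∧ IsConn τ n (Df n) (g n)) ∧ ∀ x, ψ x = ∑ n ∈ s, g n x

/-- An `Der_A(B,X)`-connection on `N` (along the `Bᵉ`-module `X`): a DG `B`-module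
homomorphism `∇ : Der_A(B,X) → Conn(N, N ⊗_B X)` such that `∇_D` is a `D`-connection
for every `D`.  (Equivalently, a DG `B`-module splitting of `ν`.) -/
def IsLConn {P : EnvSetup R} {N : DGMod P.B} {X : DGMod P.E} (τ : TensorBX P N X)
    (Cn : (P.B.carrier → X.carrier) → N.carrier → τ.T.carrier) : Prop :=
  (∀ (n : ℤ) (D), IsDer P X n D → IsConn τ n D (Cn D)) ∧
  (∀ D D', InSDer P X D → InSDer P X D' →
    ∀ x, Cn (fun b => D b + D' b) x = Cn D x + Cn D' x) ∧
  (∀ (r : R) (D), InSDer P X D → ∀ x, Cn (fun b => r • D b) x = r • Cn D x) ∧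
  (∀ (k n : ℤ) (b : P.B.carrier) (D), b ∈ P.B.gr k → IsDer P X n D →
    ∀ x, Cn (fun c => X.lsmul (P.inl.toFun b) (D c)) x = τ.T.lsmul b (Cn D x)) ∧
  (∀ (n : ℤ) (D), IsDer P X n D →
    ∀ x, Cn (fun b => X.d (D b) - sgn n • D (P.B.d b)) x
      = τ.T.d (Cn D x) - sgn n • Cn D (N.d x))

/-- The DG tensor product `N|_A ⊗_A B` (a DG `B`-module through the right factor),
together with the canonical DG `B`-module epimorphism `pr = π_N : N|_A ⊗_A B → N`,
`n ⊗ b ↦ nb`. -/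
structure TensorAB (P : EnvSetup R) (N : DGMod P.B) : Type (u + 1) where
  T : DGMod P.B
  t : N.carrier → P.B.carrier → T.carrier
  t_addl : ∀ m m' b, t (m + m') b = t m b + t m' b
  t_addr : ∀ m b b', t m (b + b') = t m b + t m b'
  t_rsml : ∀ (r : R) m b, t (r • m) b = r • t m b
  t_rsmr : ∀ (r : R) m b, t m (r • b) = r • t m b
  t_smul : ∀ m b b', t m (b * b') = T.smul (t m b) b'
  t_bal : ∀ (m : N.carrier) (a : P.A.carrier) (b : P.B.carrier),
    t (N.smul m (P.φ.toFun a)) b = t m (P.φ.toFun a * b)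
  t_gr : ∀ {i j : ℤ} {m b}, m ∈ N.gr i → b ∈ P.B.gr j → t m b ∈ T.gr (i + j)
  t_d : ∀ {i : ℤ} (m b), m ∈ N.gr i → T.d (t m b) = t (N.d m) b + sgn i • t m (P.B.d b)
  span : ∀ y : T.carrier, y ∈ Submodule.span R {z : T.carrier | ∃ m b, z = t m b}
  univ : ∀ (Q : Type u) [AddCommGroup Q] [Module R Q] (h : N.carrier → P.B.carrier → Q),
    (∀ m m' b, h (m + m') b = h m b + h m' b) →
    (∀ m b b', h m (b + b') = h m b + h m b') →
    (∀ (r : R) m b, h (r • m) b = r • h m b) →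
    (∀ (r : R) m b, h m (r • b) = r • h m b) →
    (∀ (m : N.carrier) (a : P.A.carrier) (b : P.B.carrier),
      h (N.smul m (P.φ.toFun a)) b = h m (P.φ.toFun a * b)) →
    ∃! H : T.carrier →ₗ[R] Q, ∀ m b, H (t m b) = h m b
  pr : T.carrier → N.carrier
  pr_add : ∀ y y', pr (y + y') = pr y + pr y'
  pr_rsmul : ∀ (r : R) y, pr (r • y) = r • pr y
  pr_smul : ∀ y b, pr (T.smul y b) = N.smul (pr y) b
  pr_gr : ∀ {i : ℤ} {y}, y ∈ T.gr i → pr y ∈ N.gr i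
  pr_d : ∀ y, pr (T.d y) = N.d (pr y)
  pr_t : ∀ m b, pr (t m b) = N.smul m b

/-- `N` is naïvely liftable to `A`: the DG `B`-module epimorphism
`π_N : N|_A ⊗_A B → N` has a right inverse in the category of DG `B`-modules. -/
def NaivelyLiftable {P : EnvSetup R} {N : DGMod P.B} (σ : TensorAB P N) : Prop :=
  ∃ ρ : N.carrier → σ.T.carrier, IsGLin N σ.T 0 ρ ∧
    (∀ x, σ.T.d (ρ x) = ρ (N.d x)) ∧ ∀ x, σ.pr (ρ x) = x

end DG
/- Part 3 appended to common -/
namespace DG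

variable {R : Type u} [CommRing R]

/-- A DG `Bᵉ`-module `X` regarded as a DG `B`-module via `inr : B → Bᵉ`
(e.g. when `XJ = 0`, via `B ≅ Bᵉ/J`). -/
def EnvSetup.toBMod (P : EnvSetup R) (X : DGMod P.E) : DGMod P.B where
  carrier := X.carrier
  acg := X.acg
  mod := X.mod
  smul x b := X.smul x (P.inr.toFun b)
  smul_add m a b := by simp only [P.inr.map_add, X.smul_add]
  add_smul m n a := by simp only [X.add_smul]
  smul_rsmul r m a := by simp only [X.smul_rsmul]
  smul_one m := by simp only [P.inr.map_one, X.smul_one]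
  smul_mul m a b := by simp only [P.inr.map_mul, X.smul_mul]
  smul_algebraMap r m := by simp only [P.inr.map_algebraMap, X.smul_algebraMap]
  gr := X.gr
  internal := X.internal
  smul_mem h1 h2 := X.smul_mem h1 (P.inr.map_gr h2)
  d := X.d
  d_mem := X.d_mem
  d_d := X.d_d
  leibniz a h := by
    simp only [P.inr.map_d]
    exact X.leibniz (P.inr.toFun a) h

/-- A DG algebra `S` regarded as a DG module over itself. -/
def DGAlg.toSelfMod (S : DGAlg R) : DGMod S where
  carrier := S.carrier
  smul a b := a * b
  smul_add := mul_add
  add_smul := add_mul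
  smul_rsmul r m a := smul_mul_assoc r m a
  smul_one := mul_one
  smul_mul m a b := (mul_assoc m a b).symm
  smul_algebraMap r m := by rw [Algebra.smul_def, Algebra.commutes]
  gr := S.gr
  internal := S.internal
  smul_mem := S.mul_mem
  d := S.d
  d_mem := S.d_mem
  d_d := S.d_d
  leibniz := S.leibniz

/-- The DG tensor product `N ⊗_B X` of two DG `B`-modules. -/
structure TensorBB (P : EnvSetup R) (N X : DGMod P.B) : Type (u + 1) where
  T : DGMod P.B
  t : N.carrier → X.carrier → T.carrier
  t_addl : ∀ m m' x, t (m + m') x = t m x + t m' x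
  t_addr : ∀ m x x', t m (x + x') = t m x + t m x'
  t_rsml : ∀ (r : R) m x, t (r • m) x = r • t m x
  t_rsmr : ∀ (r : R) m x, t m (r • x) = r • t m x
  t_smul : ∀ m x b, t m (X.smul x b) = T.smul (t m x) b
  t_bal : ∀ {i j : ℤ} (m : N.carrier) (x : X.carrier) (b : P.B.carrier),
    b ∈ P.B.gr i → x ∈ X.gr j →
    t (N.smul m b) x = sgn (i * j) • t m (X.smul x b)
  t_gr : ∀ {i j : ℤ} {m x}, m ∈ N.gr i → x ∈ X.gr j → t m x ∈ T.gr (i + j)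
  t_d : ∀ {i : ℤ} (m x), m ∈ N.gr i → T.d (t m x) = t (N.d m) x + sgn i • t m (X.d x)
  span : ∀ y : T.carrier, y ∈ Submodule.span R {z : T.carrier | ∃ m x, z = t m x}
  univ : ∀ (Q : Type u) [AddCommGroup Q] [Module R Q] (h : N.carrier → X.carrier → Q),
    (∀ m m' x, h (m + m') x = h m x + h m' x) →
    (∀ m x x', h m (x + x') = h m x + h m x') →
    (∀ (r : R) m x, h (r • m) x = r • h m x) →
    (∀ (r : R) m x, h m (r • x) = r • h m x) →
    (∀ {i j : ℤ} (m x) (b : P.B.carrier), b ∈ P.B.gr i → x ∈ X.gr j →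
      h (N.smul m b) x = sgn (i * j) • h m (X.smul x b)) →
    ∃! H : T.carrier →ₗ[R] Q, ∀ m x, H (t m x) = h m x

/-- `D : B → X` is an `A`-derivation of degree `n` with values in the DG `B`-module `X`. -/
def IsDerB (P : EnvSetup R) (X : DGMod P.B) (n : ℤ) (D : P.B.carrier → X.carrier) : Prop :=
  (∀ b c, D (b + c) = D b + D c) ∧
  (∀ (r : R) b, D (r • b) = r • D b) ∧
  (∀ (b : P.B.carrier) (a : P.A.carrier),
    D (b * P.φ.toFun a) = X.smul (D b) (P.φ.toFun a)) ∧
  (∀ i : ℤ, ∀ b ∈ P.B.gr i, D b ∈ X.gr (i + n)) ∧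
  (∀ (i j : ℤ) (b c : P.B.carrier), b ∈ P.B.gr i → c ∈ P.B.gr j →
    D (b * c) = X.smul (D b) c + sgn (i * j) • X.smul (D c) b)

/-- `D` belongs to `Der_A(B,X)` for a DG `B`-module `X`. -/
def InSDerB (P : EnvSetup R) (X : DGMod P.B) (D : P.B.carrier → X.carrier) : Prop :=
  ∃ (s : Finset ℤ) (g : ℤ → P.B.carrier → X.carrier),
    (∀ n ∈ s, IsDerB P X n (g n)) ∧ ∀ b, D b = ∑ n ∈ s, g n b

/-- `ψ : N → N ⊗_B X` is a `D`-connection on `N` along the DG `B`-module `X`. -/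
def IsConnB {P : EnvSetup R} {N X : DGMod P.B} (τ : TensorBB P N X)
    (n : ℤ) (D : P.B.carrier → X.carrier) (ψ : N.carrier → τ.T.carrier) : Prop :=
  (∀ x y : N.carrier, ψ (x + y) = ψ x + ψ y) ∧
  (∀ (r : R) (x : N.carrier), ψ (r • x) = r • ψ x) ∧
  (∀ i : ℤ, ∀ x ∈ N.gr i, ψ x ∈ τ.T.gr (i + n)) ∧
  (∀ (i : ℤ) (x : N.carrier) (b : P.B.carrier), x ∈ N.gr i →
    ψ (N.smul x b) = τ.T.smul (ψ x) b + sgn (n * i) • τ.t x (D b))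

/-- A `Der_A(B,X)`-connection on `N` along a DG `B`-module `X` (equivalently, a DG
`B`-module splitting of `ν : Conn(N, N ⊗_B X) → Der_A(B,X)`). -/
def IsLConnB {P : EnvSetup R} {N X : DGMod P.B} (τ : TensorBB P N X)
    (Cn : (P.B.carrier → X.carrier) → N.carrier → τ.T.carrier) : Prop :=
  (∀ (n : ℤ) (D), IsDerB P X n D → IsConnB τ n D (Cn D)) ∧
  (∀ D D', InSDerB P X D → InSDerB P X D' →
    ∀ x, Cn (fun b => D b + D' b) x = Cn D x + Cn D' x) ∧
  (∀ (r : R) (D), InSDerB P X D → ∀ x, Cn (fun b => r • D b) x = r • Cn D x) ∧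
  (∀ (k n : ℤ) (b : P.B.carrier) (D), b ∈ P.B.gr k → IsDerB P X n D →
    ∀ x, Cn (fun c => X.lsmul b (D c)) x = τ.T.lsmul b (Cn D x)) ∧
  (∀ (n : ℤ) (D), IsDerB P X n D →
    ∀ x, Cn (fun b => X.d (D b) - sgn n • D (P.B.d b)) x
      = τ.T.d (Cn D x) - sgn n • Cn D (N.d x))

/-- `D : B → B` is an `A`-derivation of `B` of degree `n` (an element of
`Der_A(B) = Der_A(B,B)`). -/
def IsDerSelf (P : EnvSetup R) (n : ℤ) (D : P.B.carrier → P.B.carrier) : Prop :=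
  (∀ b c, D (b + c) = D b + D c) ∧
  (∀ (r : R) b, D (r • b) = r • D b) ∧
  (∀ (b : P.B.carrier) (a : P.A.carrier), D (b * P.φ.toFun a) = D b * P.φ.toFun a) ∧
  (∀ i : ℤ, ∀ b ∈ P.B.gr i, D b ∈ P.B.gr (i + n)) ∧
  (∀ (i j : ℤ) (b c : P.B.carrier), b ∈ P.B.gr i → c ∈ P.B.gr j →
    D (b * c) = D b * c + sgn (i * j) • (D c * b))

/-- `D` belongs to `Der_A(B) = ⊕_{n ∈ ℤ} Der_A(B)_n`. -/
def InSDerSelf (P : EnvSetup R) (D : P.B.carrier → P.B.carrier) : Prop :=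
  ∃ (s : Finset ℤ) (g : ℤ → P.B.carrier → P.B.carrier),
    (∀ n ∈ s, IsDerSelf P n (g n)) ∧ ∀ b, D b = ∑ n ∈ s, g n b

/-- `ψ : N → N` is a `D`-connection on `N` along `B` (identifying `N ⊗_B B ≅ N`):
`ψ(xb) = ψ(x)b + (-1)^{|D||x|} x D(b)`. -/
def IsConnSelf (P : EnvSetup R) (N : DGMod P.B) (n : ℤ)
    (D : P.B.carrier → P.B.carrier) (ψ : N.carrier → N.carrier) : Prop :=
  (∀ x y : N.carrier, ψ (x + y) = ψ x + ψ y) ∧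
  (∀ (r : R) (x : N.carrier), ψ (r • x) = r • ψ x) ∧
  (∀ i : ℤ, ∀ x ∈ N.gr i, ψ x ∈ N.gr (i + n)) ∧
  (∀ (i : ℤ) (x : N.carrier) (b : P.B.carrier), x ∈ N.gr i →
    ψ (N.smul x b) = N.smul (ψ x) b + sgn (n * i) • N.smul x (D b))

/-- A `Der_A(B)`-connection on `N` (along `B`). -/
def IsLConnSelf (P : EnvSetup R) (N : DGMod P.B)
    (Cn : (P.B.carrier → P.B.carrier) → N.carrier → N.carrier) : Prop :=
  (∀ (n : ℤ) (D), IsDerSelf P n D → IsConnSelf P N n D (Cn D)) ∧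
  (∀ D D', InSDerSelf P D → InSDerSelf P D' →
    ∀ x, Cn (fun b => D b + D' b) x = Cn D x + Cn D' x) ∧
  (∀ (r : R) (D), InSDerSelf P D → ∀ x, Cn (fun b => r • D b) x = r • Cn D x) ∧
  (∀ (k n : ℤ) (b : P.B.carrier) (D), b ∈ P.B.gr k → IsDerSelf P n D →
    ∀ x, Cn (fun c => b * D c) x = N.lsmul b (Cn D x)) ∧
  (∀ (n : ℤ) (D), IsDerSelf P n D →
    ∀ x, Cn (fun b => P.B.d (D b) - sgn n • D (P.B.d b)) x
      = N.d (Cn D x) - sgn n • Cn D (N.d x))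

/-- The trivial `D`-connection `φ(D)` on a graded-free DG `B`-module `N` with
homogeneous basis `e` (of degrees `deg`), along a DG `Bᵉ`-module `X`:
`φ(D)(Σ e_λ b_λ) = Σ (-1)^{|D||e_λ|} e_λ ⊗ D(b_λ)`. -/
noncomputable def trivConn {P : EnvSetup R} {N : DGMod P.B} {X : DGMod P.E}
    (τ : TensorBX P N X) {ι : Type u} (e : ι → N.carrier) (deg : ι → ℤ)
    (hb : Function.Bijective fun c : ι →₀ P.B.carrier => c.sum fun l b => N.smul (e l) b)
    (n : ℤ) (D : P.B.carrier → X.carrier) : N.carrier → τ.T.carrier :=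
  fun x => ((Equiv.ofBijective _ hb).symm x).sum fun l b => sgn (n * deg l) • τ.t (e l) (D b)

/-- The trivial `D`-connection on a graded-free DG `B`-module `N` along `B`
(identifying `N ⊗_B B ≅ N`). -/
noncomputable def trivConnSelf {P : EnvSetup R} (N : DGMod P.B) {ι : Type u}
    (e : ι → N.carrier) (deg : ι → ℤ)
    (hb : Function.Bijective fun c : ι →₀ P.B.carrier => c.sum fun l b => N.smul (e l) b)
    (n : ℤ) (D : P.B.carrier → P.B.carrier) : N.carrier → N.carrier :=
  fun x => ((Equiv.ofBijective _ hb).symm x).sum fun l b => sgn (n * deg l) • N.smul (e l) (D b)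

/-- The Atiyah homomorphism `α : N → N ⊗_B J(-1)` of a semifree DG `B`-module `N` with
semifree basis `e` and structure coefficients `cf` (`∂(e_λ) = Σ_μ e_μ (cf λ)_μ`):
the `B`-linear map with `α(e_λ) = Σ_μ e_μ ⊗ δ((cf λ)_μ)`. -/
noncomputable def atiyah {P : EnvSetup R} {N : DGMod P.B} (τ : TensorBX P N P.J)
    {ι : Type u} (e : ι → N.carrier)
    (hb : Function.Bijective fun c : ι →₀ P.B.carrier => c.sum fun l b => N.smul (e l) b)
    (cf : ι → ι →₀ P.B.carrier) : N.carrier → τ.T.carrier :=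
  fun x => ((Equiv.ofBijective _ hb).symm x).sum fun l b =>
    τ.T.smul ((cf l).sum fun m b' => τ.t (e m) (P.δ b')) b

/-- The classical Atiyah map `ᾱ : N → N ⊗_B Ω(-1)` (or more generally the analogue of the
Atiyah homomorphism along a DG `B`-module `X` with respect to a derivation-like map
`D0 : B → X`): the `B`-linear map with `ᾱ(e_λ) = Σ_μ e_μ ⊗ D0((cf λ)_μ)`. -/
noncomputable def atiyahB {P : EnvSetup R} {N X : DGMod P.B} (τ : TensorBB P N X)
    {ι : Type u} (e : ι → N.carrier)
    (hb : Function.Bijective fun c : ι →₀ P.B.carrier => c.sum fun l b => N.smul (e l) b)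
    (cf : ι → ι →₀ P.B.carrier) (D0 : P.B.carrier → X.carrier) : N.carrier → τ.T.carrier :=
  fun x => ((Equiv.ofBijective _ hb).symm x).sum fun l b =>
    τ.T.smul ((cf l).sum fun m b' => τ.t (e m) (D0 b')) b

/-- The Kodaira–Spencer homomorphism `κ(D) = [∂^N, φ(D)] - φ([d^B, D])` on a graded-free
DG `B`-module `N` with respect to the homogeneous basis `e`. -/
noncomputable def kappa {P : EnvSetup R} (N : DGMod P.B) {ι : Type u}
    (e : ι → N.carrier) (deg : ι → ℤ)
    (hb : Function.Bijective fun c : ι →₀ P.B.carrier => c.sum fun l b => N.smul (e l) b)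
    (n : ℤ) (D : P.B.carrier → P.B.carrier) : N.carrier → N.carrier :=
  fun x =>
    (N.d (trivConnSelf N e deg hb n D x) - sgn n • trivConnSelf N e deg hb n D (N.d x))
      - trivConnSelf N e deg hb (n - 1) (fun b => P.B.d (D b) - sgn n • D (P.B.d b)) x

/-- The setup of the paper enriched with the differential module
`Ω = Ω_A(B) = J/J²` of `B` over `A`, a DG `B`-module with the natural
projection `pOm : J → Ω` whose kernel is `J²`. -/
structure OmegaSetup (R : Type u) [CommRing R] : Type (u + 1) where
  env : EnvSetup R
  Ω : DGMod env.B
  pOm : env.J.carrier → Ω.carrier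
  pOm_add : ∀ x y, pOm (x + y) = pOm x + pOm y
  pOm_rsmul : ∀ (r : R) x, pOm (r • x) = r • pOm x
  pOm_surj : Function.Surjective pOm
  pOm_gr : ∀ {i : ℤ} {x}, x ∈ env.J.gr i → pOm x ∈ Ω.gr i
  pOm_d : ∀ x, pOm (env.J.d x) = Ω.d (pOm x)
  pOm_smul : ∀ x ee, pOm (env.J.smul x ee) = Ω.smul (pOm x) (env.mulB.toFun ee)
  pOm_ker : ∀ x, pOm x = 0 ↔
    env.ιJ x ∈ Submodule.span R
      {y : env.E.carrier | ∃ u v : env.J.carrier, y = env.ιJ u * env.ιJ v}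

/-- The universal derivation `δ̄ : B → Ω = J/J²` induced by `δ`. -/
def OmegaSetup.δbar (Q : OmegaSetup R) : Q.env.B.carrier → Q.Ω.carrier :=
  fun b => Q.pOm (Q.env.δ b)

end DG


namespace DG

universe u

/- ==================== Auxiliary lemmas ==================== -/

section Aux

variable {R : Type u} [CommRing R]

lemma sgn_cases (m : ℤ) : sgn m = 1 ∨ sgn m = -1 := by
  rcases Int.units_eq_one_or ((-1 : ℤˣ) ^ m) with h | h
  · left; simp [sgn, h]
  · right; simp [sgn, h]

lemma sgn_zero' : sgn 0 = 1 := by simp [sgn]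

lemma sgn_smul_smul {M : Type u} [AddCommGroup M] (m : ℤ) (x : M) :
    sgn m • sgn m • x = x := by
  rcases sgn_cases m with h | h <;> simp [h]

section ProjAux

variable {M : Type u} [AddCommGroup M] [Module R M] {gr : ℤ → Submodule R M}

/-- Projection onto the degree-`k` component of an internal grading. -/
noncomputable def prj (h : DirectSum.IsInternal gr) (k : ℤ) (x : M) : M :=
  ((LinearEquiv.ofBijective (DirectSum.coeLinearMap gr) h).symm x k : M)

lemma prj_mem (h : DirectSum.IsInternal gr) (k : ℤ) (x : M) : prj h k x ∈ gr k :=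
  ((LinearEquiv.ofBijective (DirectSum.coeLinearMap gr) h).symm x k).2

lemma prj_add (h : DirectSum.IsInternal gr) (k : ℤ) (x y : M) :
    prj h k (x + y) = prj h k x + prj h k y := by
  simp [prj, map_add]

lemma prj_rsmul (h : DirectSum.IsInternal gr) (k : ℤ) (r : R) (x : M) :
    prj h k (r • x) = r • prj h k x := by
  unfold prj
  rw [map_smul, DirectSum.smul_apply]
  rfl

lemma prj_of_mem (h : DirectSum.IsInternal gr) {k : ℤ} {x : M} (hx : x ∈ gr k) :
    prj h k x = x := by
  have := h.ofBijective_coeLinearMap_of_mem hx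
  simpa [prj] using congrArg Subtype.val this

lemma prj_of_mem_ne (h : DirectSum.IsInternal gr) {i k : ℤ} {x : M} (hx : x ∈ gr i)
    (hik : i ≠ k) : prj h k x = 0 := by
  have := h.ofBijective_coeLinearMap_of_mem_ne hik hx
  simpa [prj] using congrArg Subtype.val this

lemma exists_hom_sum (h : DirectSum.IsInternal gr) (x : M) :
    ∃ (t : Finset ℤ) (f : ℤ → M), (∀ k, f k ∈ gr k) ∧ x = ∑ k ∈ t, f k := by
  classical
  set e := (LinearEquiv.ofBijective (DirectSum.coeLinearMap gr) h).symm with he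
  refine ⟨(e x).support, fun k => (e x k : M), fun k => (e x k).2, ?_⟩
  have hx : x = DirectSum.coeLinearMap gr (e x) := by
    rw [he]
    exact ((LinearEquiv.ofBijective (DirectSum.coeLinearMap gr) h).apply_symm_apply x).symm
  conv_lhs => rw [hx]
  rw [DirectSum.coeLinearMap_eq_dfinsuppSum]
  rfl

end ProjAux

section HomAux

variable {R : Type u} [CommRing R]

/-- A DG algebra homomorphism as an additive monoid homomorphism. -/
def DGHom.addHom {S T : DGAlg R} (f : DGHom S T) : S.carrier →+ T.carrier :=
  AddMonoidHom.mk' f.toFun f.map_add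

@[simp] lemma DGHom.addHom_apply {S T : DGAlg R} (f : DGHom S T) (x : S.carrier) :
    f.addHom x = f.toFun x := rfl

lemma DGHom.map_rsmul {S T : DGAlg R} (f : DGHom S T) (r : R) (x : S.carrier) :
    f.toFun (r • x) = r • f.toFun x := by
  rw [Algebra.smul_def, f.map_mul, f.map_algebraMap, ← Algebra.smul_def]

lemma DGHom.map_zero' {S T : DGAlg R} (f : DGHom S T) : f.toFun 0 = 0 :=
  f.addHom.map_zero

lemma DGHom.map_sub' {S T : DGAlg R} (f : DGHom S T) (x y : S.carrier) :
    f.toFun (x - y) = f.toFun x - f.toFun y :=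
  f.addHom.map_sub x y

lemma DGHom.map_zsmul' {S T : DGAlg R} (f : DGHom S T) (m : ℤ) (x : S.carrier) :
    f.toFun (m • x) = m • f.toFun x :=
  f.addHom.map_zsmul m x

lemma DGHom.map_sum' {S T : DGAlg R} (f : DGHom S T) {ι : Type} (t : Finset ι)
    (g : ι → S.carrier) : f.toFun (∑ i ∈ t, g i) = ∑ i ∈ t, f.toFun (g i) :=
  map_sum f.addHom g t

/-- Left-multiplication-by-fixed-element additive hom of a DG module. -/
def DGMod.smulHomL {S : DGAlg R} (M : DGMod S) (a : S.carrier) : M.carrier →+ M.carrier :=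
  AddMonoidHom.mk' (fun m => M.smul m a) (fun x y => M.add_smul x y a)

/-- Fixed-element action additive hom of a DG module. -/
def DGMod.smulHomR {S : DGAlg R} (M : DGMod S) (m : M.carrier) : S.carrier →+ M.carrier :=
  AddMonoidHom.mk' (fun a => M.smul m a) (fun x y => M.smul_add m x y)

lemma DGMod.zero_smul' {S : DGAlg R} (M : DGMod S) (a : S.carrier) : M.smul 0 a = 0 :=
  (M.smulHomL a).map_zero

lemma DGMod.smul_zero' {S : DGAlg R} (M : DGMod S) (m : M.carrier) : M.smul m 0 = 0 :=
  (M.smulHomR m).map_zero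

lemma DGMod.zsmul_smul' {S : DGAlg R} (M : DGMod S) (z : ℤ) (m : M.carrier) (a : S.carrier) :
    M.smul (z • m) a = z • M.smul m a :=
  (M.smulHomL a).map_zsmul z m

lemma DGMod.smul_zsmul' {S : DGAlg R} (M : DGMod S) (z : ℤ) (m : M.carrier) (a : S.carrier) :
    M.smul m (z • a) = z • M.smul m a :=
  (M.smulHomR m).map_zsmul z a

lemma DGMod.smul_sub' {S : DGAlg R} (M : DGMod S) (m : M.carrier) (a b : S.carrier) :
    M.smul m (a - b) = M.smul m a - M.smul m b :=
  (M.smulHomR m).map_sub a b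

lemma DGMod.sub_smul' {S : DGAlg R} (M : DGMod S) (m n : M.carrier) (a : S.carrier) :
    M.smul (m - n) a = M.smul m a - M.smul n a :=
  (M.smulHomL a).map_sub m n

lemma DGMod.smul_rsmul' {S : DGAlg R} (M : DGMod S) (r : R) (m : M.carrier) (a : S.carrier) :
    M.smul m (r • a) = r • M.smul m a := by
  rw [Algebra.smul_def, M.smul_mul, M.smul_algebraMap, M.smul_rsmul]

/-- `ιJ` as an additive monoid homomorphism. -/
def EnvSetup.iJHom (P : EnvSetup R) : P.J.carrier →+ P.E.carrier :=
  AddMonoidHom.mk' P.ιJ P.ιJ_add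

@[simp] lemma EnvSetup.iJHom_apply (P : EnvSetup R) (x : P.J.carrier) :
    P.iJHom x = P.ιJ x := rfl

/-- `pOm` as an additive monoid homomorphism. -/
def OmegaSetup.pOmHom (Q : OmegaSetup R) : Q.env.J.carrier →+ Q.Ω.carrier :=
  AddMonoidHom.mk' Q.pOm Q.pOm_add

@[simp] lemma OmegaSetup.pOmHom_apply (Q : OmegaSetup R) (x : Q.env.J.carrier) :
    Q.pOmHom x = Q.pOm x := rfl

lemma EnvSetup.ιJ_zsmul (P : EnvSetup R) (z : ℤ) (x : P.J.carrier) :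
    P.ιJ (z • x) = z • P.ιJ x :=
  P.iJHom.map_zsmul z x

lemma OmegaSetup.pOm_zsmul (Q : OmegaSetup R) (z : ℤ) (x : Q.env.J.carrier) :
    Q.pOm (z • x) = z • Q.pOm x :=
  Q.pOmHom.map_zsmul z x

lemma OmegaSetup.pOm_zero (Q : OmegaSetup R) : Q.pOm 0 = 0 :=
  Q.pOmHom.map_zero

lemma EnvSetup.ιJ_zero (P : EnvSetup R) : P.ιJ 0 = 0 :=
  P.iJHom.map_zero

lemma EnvSetup.ιJ_sum (P : EnvSetup R) {ι : Type} (t : Finset ι) (g : ι → P.J.carrier) :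
    P.ιJ (∑ i ∈ t, g i) = ∑ i ∈ t, P.ιJ (g i) :=
  map_sum P.iJHom g t

lemma EnvSetup.mulB_iJ (P : EnvSetup R) (x : P.J.carrier) :
    P.mulB.toFun (P.ιJ x) = 0 :=
  (P.ιJ_range (P.ιJ x)).mp ⟨x, rfl⟩

end HomAux

section DeltaAux

variable {R : Type u} [CommRing R] (P : EnvSetup R)

lemma EnvSetup.δ_add (b c : P.B.carrier) : P.δ (b + c) = P.δ b + P.δ c := by
  apply P.ιJ_inj
  rw [P.ιJ_add, P.ιJ_δ, P.ιJ_δ, P.ιJ_δ, P.inl.map_add, P.inr.map_add]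
  abel

lemma EnvSetup.δ_rsmul (r : R) (b : P.B.carrier) : P.δ (r • b) = r • P.δ b := by
  apply P.ιJ_inj
  rw [P.ιJ_rsmul, P.ιJ_δ, P.ιJ_δ, P.inl.map_rsmul, P.inr.map_rsmul, smul_sub]

/-- `δ` as an additive monoid homomorphism. -/
def EnvSetup.δHom : P.B.carrier →+ P.J.carrier :=
  AddMonoidHom.mk' P.δ P.δ_add

@[simp] lemma EnvSetup.δHom_apply (b : P.B.carrier) : P.δHom b = P.δ b := rfl

lemma EnvSetup.δ_gr {i : ℤ} {b : P.B.carrier} (hb : b ∈ P.B.gr i) : P.δ b ∈ P.J.gr i :=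
  (P.ιJ_gr i (P.δ b)).mpr (by
    rw [P.ιJ_δ]
    exact Submodule.sub_mem _ (P.inl.map_gr hb) (P.inr.map_gr hb))

lemma EnvSetup.δ_d (b : P.B.carrier) : P.δ (P.B.d b) = P.J.d (P.δ b) := by
  apply P.ιJ_inj
  rw [P.ιJ_d, P.ιJ_δ, P.ιJ_δ, map_sub, P.inl.map_d, P.inr.map_d]

lemma EnvSetup.δ_mul_phi (b : P.B.carrier) (a : P.A.carrier) :
    P.δ (b * P.φ.toFun a) = P.J.smul (P.δ b) (P.inr.toFun (P.φ.toFun a)) := by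
  apply P.ιJ_inj
  rw [P.ιJ_smul, P.ιJ_δ, P.ιJ_δ, P.inl.map_mul, P.inr.map_mul, P.inl_inr_phi, sub_mul]

lemma EnvSetup.δ_mul {i j : ℤ} {b c : P.B.carrier} (hb : b ∈ P.B.gr i) (hc : c ∈ P.B.gr j) :
    P.δ (b * c) = P.J.smul (P.δ b) (P.inr.toFun c)
      + sgn (i * j) • P.J.smul (P.δ c) (P.inl.toFun b) := by
  apply P.ιJ_inj
  rw [P.ιJ_add, P.ιJ_zsmul, P.ιJ_smul, P.ιJ_smul,
    P.ιJ_δ, P.ιJ_δ, P.ιJ_δ, P.inl.map_mul, P.inr.map_mul]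
  have hδc : P.inl.toFun c - P.inr.toFun c ∈ P.E.gr j :=
    Submodule.sub_mem _ (P.inl.map_gr hc) (P.inr.map_gr hc)
  have hcomm : P.inl.toFun b * (P.inl.toFun c - P.inr.toFun c)
      = sgn (i * j) • ((P.inl.toFun c - P.inr.toFun c) * P.inl.toFun b) :=
    P.E.gcomm (P.inl.map_gr hb) hδc
  rw [← hcomm]
  rw [sub_mul, mul_sub]
  abel

end DeltaAux

section DeltaBarAux

variable {R : Type u} [CommRing R] (Q : OmegaSetup R)

lemma OmegaSetup.δbar_add (b c : Q.env.B.carrier) :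
    Q.δbar (b + c) = Q.δbar b + Q.δbar c := by
  unfold OmegaSetup.δbar
  rw [Q.env.δ_add, Q.pOm_add]

lemma OmegaSetup.δbar_rsmul (r : R) (b : Q.env.B.carrier) :
    Q.δbar (r • b) = r • Q.δbar b := by
  unfold OmegaSetup.δbar
  rw [Q.env.δ_rsmul, Q.pOm_rsmul]

lemma OmegaSetup.δbar_gr {i : ℤ} {b : Q.env.B.carrier} (hb : b ∈ Q.env.B.gr i) :
    Q.δbar b ∈ Q.Ω.gr i :=
  Q.pOm_gr (Q.env.δ_gr hb)

lemma OmegaSetup.δbar_d (b : Q.env.B.carrier) :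
    Q.δbar (Q.env.B.d b) = Q.Ω.d (Q.δbar b) := by
  unfold OmegaSetup.δbar
  rw [Q.env.δ_d, Q.pOm_d]

lemma OmegaSetup.δbar_smul (b c : Q.env.B.carrier) :
    Q.Ω.smul (Q.δbar b) c = Q.pOm (Q.env.J.smul (Q.env.δ b) (Q.env.inr.toFun c)) := by
  unfold OmegaSetup.δbar
  rw [Q.pOm_smul, Q.env.mulB_inr]

lemma OmegaSetup.δbar_mul_phi (b : Q.env.B.carrier) (a : Q.env.A.carrier) :
    Q.δbar (b * Q.env.φ.toFun a) = Q.Ω.smul (Q.δbar b) (Q.env.φ.toFun a) := by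
  unfold OmegaSetup.δbar
  rw [Q.env.δ_mul_phi, Q.pOm_smul, Q.env.mulB_inr]

lemma OmegaSetup.δbar_mul {i j : ℤ} {b c : Q.env.B.carrier} (hb : b ∈ Q.env.B.gr i)
    (hc : c ∈ Q.env.B.gr j) :
    Q.δbar (b * c) = Q.Ω.smul (Q.δbar b) c + sgn (i * j) • Q.Ω.smul (Q.δbar c) b := by
  unfold OmegaSetup.δbar
  rw [Q.env.δ_mul hb hc, Q.pOm_add, Q.pOm_zsmul, Q.pOm_smul, Q.pOm_smul,
    Q.env.mulB_inr, Q.env.mulB_inl]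

end DeltaBarAux

section SpanAux

variable {R : Type u} [CommRing R]

/-- Homogeneous generators `inl b * inr c` of `E`. -/
def EnvSetup.genE (P : EnvSetup R) : Set P.E.carrier :=
  {y | ∃ (i j : ℤ) (b c : P.B.carrier), b ∈ P.B.gr i ∧ c ∈ P.B.gr j ∧
    y = P.inl.toFun b * P.inr.toFun c}

lemma EnvSetup.E_span_homog (P : EnvSetup R) (e : P.E.carrier) :
    e ∈ Submodule.span R P.genE := by
  have h0 : ∀ b c : P.B.carrier, P.inl.toFun b * P.inr.toFun c ∈ Submodule.span R P.genE := by
    intro b c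
    obtain ⟨t, f, hf, hb⟩ := exists_hom_sum P.B.internal b
    obtain ⟨s, g, hg, hc⟩ := exists_hom_sum P.B.internal c
    rw [hb, hc, P.inl.map_sum', P.inr.map_sum', Finset.sum_mul_sum]
    refine Submodule.sum_mem _ fun k hk => Submodule.sum_mem _ fun l hl => ?_
    exact Submodule.subset_span ⟨k, l, f k, g l, hf k, hg l, rfl⟩
  refine Submodule.span_le.mpr ?_ (P.span e)
  rintro y ⟨b, c, rfl⟩
  exact h0 b c

/-- Homogeneous generators `δ(b)·(1⊗c)` of `J`. -/
def EnvSetup.genJ (P : EnvSetup R) : Set P.J.carrier :=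
  {x | ∃ (i j : ℤ) (b c : P.B.carrier), b ∈ P.B.gr i ∧ c ∈ P.B.gr j ∧
    x = P.J.smul (P.δ b) (P.inr.toFun c)}

lemma EnvSetup.J_span (P : EnvSetup R) (x : P.J.carrier) :
    x ∈ Submodule.span R P.genJ := by
  -- first: for every `e : E` there is `x' ∈ span genJ` with `ιJ x' = e - inr (mulB e)`
  have claim : ∀ e : P.E.carrier, ∃ x' ∈ Submodule.span R P.genJ,
      P.ιJ x' = e - P.inr.toFun (P.mulB.toFun e) := by
    intro e
    refine Submodule.span_induction ?_ ?_ ?_ ?_ (P.span e)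
    · rintro y ⟨b, c, rfl⟩
      obtain ⟨t, f, hf, hb⟩ := exists_hom_sum P.B.internal b
      obtain ⟨s, g, hg, hc⟩ := exists_hom_sum P.B.internal c
      refine ⟨∑ k ∈ t, ∑ l ∈ s, P.J.smul (P.δ (f k)) (P.inr.toFun (g l)), ?_, ?_⟩
      · refine Submodule.sum_mem _ fun k hk => Submodule.sum_mem _ fun l hl =>
          Submodule.subset_span ⟨k, l, f k, g l, hf k, hg l, rfl⟩
      · rw [P.ιJ_sum]
        have : ∀ k ∈ t, P.ιJ (∑ l ∈ s, P.J.smul (P.δ (f k)) (P.inr.toFun (g l)))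
            = ∑ l ∈ s, P.ιJ (P.δ (f k)) * P.inr.toFun (g l) := by
          intro k _
          rw [P.ιJ_sum]
          exact Finset.sum_congr rfl fun l _ => P.ιJ_smul _ _
        rw [Finset.sum_congr rfl this, ← Finset.sum_mul_sum]
        have h1 : ∑ k ∈ t, P.ιJ (P.δ (f k)) = P.inl.toFun b - P.inr.toFun b := by
          rw [hb, P.inl.map_sum', P.inr.map_sum', ← Finset.sum_sub_distrib]
          exact Finset.sum_congr rfl fun k _ => P.ιJ_δ (f k)
        have h2 : ∑ l ∈ s, P.inr.toFun (g l) = P.inr.toFun c := by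
          rw [hc, P.inr.map_sum']
        rw [h1, h2, P.mulB.map_mul, P.mulB_inl, P.mulB_inr, P.inr.map_mul, sub_mul]
    · exact ⟨0, Submodule.zero_mem _, by
        rw [P.ιJ_zero, P.mulB.map_zero', P.inr.map_zero', sub_zero]⟩
    · rintro e₁ e₂ - - ⟨x₁, hx₁, h1⟩ ⟨x₂, hx₂, h2⟩
      exact ⟨x₁ + x₂, Submodule.add_mem _ hx₁ hx₂, by
        rw [P.ιJ_add, h1, h2, P.mulB.map_add, P.inr.map_add]
        abel⟩
    · rintro r e₁ - ⟨x₁, hx₁, h1⟩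
      exact ⟨r • x₁, Submodule.smul_mem _ r hx₁, by
        rw [P.ιJ_rsmul, h1, P.mulB.map_rsmul, P.inr.map_rsmul, smul_sub]⟩
  obtain ⟨x', hx', h⟩ := claim (P.ιJ x)
  rw [P.mulB_iJ, P.inr.map_zero', sub_zero] at h
  rwa [P.ιJ_inj h] at hx'

variable (Q : OmegaSetup R)

/-- Homogeneous generators `δ̄(b)·c` of `Ω`. -/
def OmegaSetup.genΩ : Set Q.Ω.carrier :=
  {w | ∃ (i j : ℤ) (b c : Q.env.B.carrier), b ∈ Q.env.B.gr i ∧ c ∈ Q.env.B.gr j ∧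
    w = Q.Ω.smul (Q.δbar b) c}

/-- Homogeneous generators of total degree `k`. -/
def OmegaSetup.genΩk (k : ℤ) : Set Q.Ω.carrier :=
  {w | ∃ (i j : ℤ) (b c : Q.env.B.carrier), b ∈ Q.env.B.gr i ∧ c ∈ Q.env.B.gr j ∧
    i + j = k ∧ w = Q.Ω.smul (Q.δbar b) c}

lemma OmegaSetup.Ω_span (w : Q.Ω.carrier) : w ∈ Submodule.span R Q.genΩ := by
  obtain ⟨x, rfl⟩ := Q.pOm_surj w
  have := Q.env.J_span x
  refine Submodule.span_induction ?_ ?_ ?_ ?_ this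
  · rintro y ⟨i, j, b, c, hb, hc, rfl⟩
    refine Submodule.subset_span ⟨i, j, b, c, hb, hc, ?_⟩
    rw [Q.δbar_smul]
  · rw [Q.pOm_zero]; exact Submodule.zero_mem _
  · intro y z _ _ hy hz
    rw [Q.pOm_add]; exact Submodule.add_mem _ hy hz
  · intro r y _ hy
    rw [Q.pOm_rsmul]; exact Submodule.smul_mem _ r hy

lemma OmegaSetup.Ω_gr_span {k : ℤ} {w : Q.Ω.carrier} (hw : w ∈ Q.Ω.gr k) :
    w ∈ Submodule.span R (Q.genΩk k) := by
  have hs := Q.Ω_span w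
  have key : prj Q.Ω.internal k w ∈ Submodule.span R (Q.genΩk k) := by
    refine Submodule.span_induction ?_ ?_ ?_ ?_ hs
    · rintro y ⟨i, j, b, c, hb, hc, rfl⟩
      have hy : Q.Ω.smul (Q.δbar b) c ∈ Q.Ω.gr (i + j) :=
        Q.Ω.smul_mem (Q.δbar_gr hb) hc
      by_cases hk : i + j = k
      · have hy' : Q.Ω.smul (Q.δbar b) c ∈ Q.Ω.gr k := by rw [← hk]; exact hy
        rw [prj_of_mem _ hy']
        exact Submodule.subset_span ⟨i, j, b, c, hb, hc, hk, rfl⟩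
      · rw [prj_of_mem_ne _ hy hk]
        exact Submodule.zero_mem _
    · have : prj Q.Ω.internal k (0 : Q.Ω.carrier) = 0 := by
        have h0 : (0 : Q.Ω.carrier) ∈ Q.Ω.gr k := Submodule.zero_mem _
        exact prj_of_mem _ h0
      rw [this]; exact Submodule.zero_mem _
    · intro y z _ _ hy hz
      rw [prj_add]; exact Submodule.add_mem _ hy hz
    · intro r y _ hy
      rw [prj_rsmul]; exact Submodule.smul_mem _ r hy
  rwa [prj_of_mem _ hw] at key

end SpanAux

section MainAux

variable {R : Type u} [CommRing R]

lemma sgn_add (a b : ℤ) : sgn (a + b) = sgn a * sgn b := by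
  simp [sgn, zpow_add]

lemma DGAlg.gcomm' (S : DGAlg R) {i j : ℤ} {a b : S.carrier} (ha : a ∈ S.gr i)
    (hb : b ∈ S.gr j) : b * a = sgn (i * j) • (a * b) := by
  rw [S.gcomm ha hb, sgn_smul_smul]

lemma DGMod.sum_smul' {S : DGAlg R} (M : DGMod S) {ι : Type} (t : Finset ι)
    (f : ι → M.carrier) (a : S.carrier) :
    M.smul (∑ i ∈ t, f i) a = ∑ i ∈ t, M.smul (f i) a :=
  map_sum (M.smulHomL a) f t

lemma EnvSetup.ιJ_sub (P : EnvSetup R) (x y : P.J.carrier) :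
    P.ιJ (x - y) = P.ιJ x - P.ιJ y :=
  P.iJHom.map_sub x y

lemma OmegaSetup.pOm_sub (Q : OmegaSetup R) (x y : Q.env.J.carrier) :
    Q.pOm (x - y) = Q.pOm x - Q.pOm y :=
  Q.pOmHom.map_sub x y

lemma InSHom_props {S : DGAlg R} {M N : DGMod S} {g : M.carrier → N.carrier}
    (hg : InSHom M N g) :
    (∀ x y, g (x + y) = g x + g y) ∧
    (∀ (r : R) (x), g (r • x) = r • g x) ∧
    (∀ (x) (a : S.carrier), g (M.smul x a) = N.smul (g x) a) := by
  obtain ⟨s, gs, hgs, hsum⟩ := hg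
  refine ⟨fun x y => ?_, fun r x => ?_, fun x a => ?_⟩
  · rw [hsum, hsum, hsum, ← Finset.sum_add_distrib]
    exact Finset.sum_congr rfl fun n hn => (hgs n hn).1 x y
  · rw [hsum, hsum, Finset.smul_sum]
    exact Finset.sum_congr rfl fun n hn => (hgs n hn).2.1 r x
  · rw [hsum, hsum, N.sum_smul']
    exact Finset.sum_congr rfl fun n hn => (hgs n hn).2.2.1 x a

lemma smul_eq_of_mulB_eq (P : EnvSetup R) (X : DGMod P.E)
    (hXJ : ∀ (x : X.carrier) (ee : P.E.carrier),
      P.mulB.toFun ee = 0 → X.smul x ee = 0)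
    (x : X.carrier) {e e' : P.E.carrier} (h : P.mulB.toFun e = P.mulB.toFun e') :
    X.smul x e = X.smul x e' := by
  have h0 : P.mulB.toFun (e - e') = 0 := by rw [P.mulB.map_sub', h, sub_self]
  have h1 := hXJ x _ h0
  rw [X.smul_sub'] at h1
  exact sub_eq_zero.mp h1

/-- Statement 4, forward direction: composing with `δ̄` turns graded `B`-linear maps
into `A`-derivations. -/
lemma der_of_glin (Q : OmegaSetup R) (X : DGMod Q.env.E)
    (hXJ : ∀ (x : X.carrier) (ee : Q.env.E.carrier),
      Q.env.mulB.toFun ee = 0 → X.smul x ee = 0)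
    (n : ℤ) (g : Q.Ω.carrier → X.carrier)
    (hg : IsGLin Q.Ω (Q.env.toBMod X) n g) :
    IsDer Q.env X n (fun b => g (Q.δbar b)) := by
  obtain ⟨hadd, hrs, hsm0, hgr⟩ := hg
  have hsm : ∀ (w : Q.Ω.carrier) (c : Q.env.B.carrier),
      g (Q.Ω.smul w c) = X.smul (g w) (Q.env.inr.toFun c) := hsm0
  have gz : ∀ (z : ℤ) (w : Q.Ω.carrier), g (z • w) = z • g w :=
    fun z w => (AddMonoidHom.mk' g hadd).map_zsmul z w
  refine ⟨fun b c => ?_, fun r b => ?_, fun b a => ?_, fun i b hb => hgr i _ (Q.δbar_gr hb),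
    fun i j b c hb hc => ?_⟩
  · show g (Q.δbar (b + c)) = g (Q.δbar b) + g (Q.δbar c)
    rw [Q.δbar_add, hadd]
    rfl
  · show g (Q.δbar (r • b)) = r • g (Q.δbar b)
    rw [Q.δbar_rsmul, hrs]
    rfl
  · show g (Q.δbar (b * Q.env.φ.toFun a)) = _
    rw [Q.δbar_mul_phi, hsm]
  · show g (Q.δbar (b * c)) = X.smul (g (Q.δbar b)) (Q.env.inr.toFun c)
      + sgn (i * j) • X.smul (g (Q.δbar c)) (Q.env.inl.toFun b)
    rw [Q.δbar_mul hb hc, hadd, gz, hsm, hsm]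
    have : X.smul (g (Q.δbar c)) (Q.env.inr.toFun b)
        = X.smul (g (Q.δbar c)) (Q.env.inl.toFun b) :=
      smul_eq_of_mulB_eq Q.env X hXJ _ (by rw [Q.env.mulB_inr, Q.env.mulB_inl])
    rw [this]
    rfl

/-- Statement 4, surjectivity: every homogeneous `A`-derivation comes from a graded
`B`-linear map on `Ω`. -/
lemma exists_glin_of_der (Q : OmegaSetup R) (X : DGMod Q.env.E)
    (hXJ : ∀ (x : X.carrier) (ee : Q.env.E.carrier),
      Q.env.mulB.toFun ee = 0 → X.smul x ee = 0)
    (n : ℤ) (D : Q.env.B.carrier → X.carrier) (hD : IsDer Q.env X n D) :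
    ∃ g : Q.Ω.carrier → X.carrier, IsGLin Q.Ω (Q.env.toBMod X) n g ∧
      ∀ b, D b = g (Q.δbar b) := by
  classical
  obtain ⟨Dadd, Drs, Dphi, Dgr, Dlei⟩ := hD
  -- D 1 = 0
  have D1 : D 1 = 0 := by
    have h := Dlei 0 0 1 1 Q.env.B.one_mem Q.env.B.one_mem
    rw [one_mul, Q.env.inr.map_one, Q.env.inl.map_one, X.smul_one] at h
    have hs : sgn ((0 : ℤ) * 0) = 1 := by norm_num [sgn]
    rw [hs, one_smul] at h
    exact left_eq_add.mp h
  -- the universal map H : E → X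
  obtain ⟨H, hH, -⟩ := Q.env.univ X.carrier (fun b b' => X.smul (D b) (Q.env.inr.toFun b'))
    (fun b₁ b₂ b' => by simp only [Dadd, X.add_smul])
    (fun b b₁ b₂ => by simp only [Q.env.inr.map_add, X.smul_add])
    (fun r b b' => by simp only [Drs, X.smul_rsmul])
    (fun r b b' => by simp only [Q.env.inr.map_rsmul, X.smul_rsmul'])
    (fun a b b' => by simp only [Dphi, Q.env.inr.map_mul, X.smul_mul])
  have Hrr : ∀ u v, H (Q.env.inr.toFun u * Q.env.inr.toFun v) = 0 := by
    intro u v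
    have h1 : Q.env.inr.toFun u * Q.env.inr.toFun v
        = Q.env.inl.toFun 1 * Q.env.inr.toFun (u * v) := by
      rw [Q.env.inl.map_one, one_mul, Q.env.inr.map_mul]
    rw [h1, hH, D1, X.zero_smul']
  have HiJgen : ∀ b b', H (Q.env.ιJ (Q.env.J.smul (Q.env.δ b) (Q.env.inr.toFun b')))
      = X.smul (D b) (Q.env.inr.toFun b') := by
    intro b b'
    rw [Q.env.ιJ_smul, Q.env.ιJ_δ, sub_mul, map_sub, hH, Hrr, sub_zero]
  -- H is a map of right E-modules on J
  have Hmod : ∀ (x : Q.env.J.carrier) (e : Q.env.E.carrier),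
      H (Q.env.ιJ x * e) = X.smul (H (Q.env.ιJ x)) e := by
    intro x
    refine Submodule.span_induction ?_ ?_ ?_ ?_ (Q.env.J_span x)
    · rintro y ⟨i, j, b, b', hb, hb', rfl⟩ e
      refine Submodule.span_induction ?_ ?_ ?_ ?_ (Q.env.E_span_homog e)
      · rintro e' ⟨k, l, c, c', hc, hc', rfl⟩
        -- generator-generator computation
        rw [HiJgen]
        have hRHS : X.smul (X.smul (D b) (Q.env.inr.toFun b'))
              (Q.env.inl.toFun c * Q.env.inr.toFun c')
            = X.smul (D b) (Q.env.inr.toFun (b' * (c * c'))) := by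
          rw [← X.smul_mul]
          refine smul_eq_of_mulB_eq Q.env X hXJ _ ?_
          rw [Q.env.mulB.map_mul, Q.env.mulB.map_mul, Q.env.mulB_inr, Q.env.mulB_inl,
            Q.env.mulB_inr, Q.env.mulB_inr]
        rw [hRHS, Q.env.ιJ_smul, Q.env.ιJ_δ, sub_mul, sub_mul, map_sub]
        have hA : Q.env.inl.toFun b * Q.env.inr.toFun b'
              * (Q.env.inl.toFun c * Q.env.inr.toFun c')
            = sgn (j * k) • (Q.env.inl.toFun (b * c) * Q.env.inr.toFun (b' * c')) := by
          have h1 : Q.env.inr.toFun b' * Q.env.inl.toFun c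
              = sgn (j * k) • (Q.env.inl.toFun c * Q.env.inr.toFun b') :=
            Q.env.E.gcomm (Q.env.inr.map_gr hb') (Q.env.inl.map_gr hc)
          rw [Q.env.inl.map_mul, Q.env.inr.map_mul, mul_assoc,
            ← mul_assoc (Q.env.inr.toFun b') (Q.env.inl.toFun c) (Q.env.inr.toFun c'),
            h1, smul_mul_assoc, mul_smul_comm]
          congr 1
          noncomm_ring
        have hB : Q.env.inr.toFun b * Q.env.inr.toFun b'
              * (Q.env.inl.toFun c * Q.env.inr.toFun c')
            = sgn ((i + j) * k) • (Q.env.inl.toFun c * Q.env.inr.toFun (b * b' * c')) := by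
          have h2 : Q.env.inr.toFun (b * b') * Q.env.inl.toFun c
              = sgn ((i + j) * k) • (Q.env.inl.toFun c * Q.env.inr.toFun (b * b')) :=
            Q.env.E.gcomm (Q.env.inr.map_gr (Q.env.B.mul_mem hb hb')) (Q.env.inl.map_gr hc)
          rw [← Q.env.inr.map_mul, ← mul_assoc, h2, smul_mul_assoc, mul_assoc,
            ← Q.env.inr.map_mul]
        rw [hA, hB, map_zsmul, map_zsmul, hH, hH, Dlei i k b c hb hc, X.add_smul,
          X.zsmul_smul']
        have h3 : X.smul (D c) (Q.env.inl.toFun b) = X.smul (D c) (Q.env.inr.toFun b) :=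
          smul_eq_of_mulB_eq Q.env X hXJ _ (by rw [Q.env.mulB_inl, Q.env.mulB_inr])
        rw [h3, ← X.smul_mul, ← X.smul_mul, ← Q.env.inr.map_mul, ← Q.env.inr.map_mul,
          smul_add, smul_smul, ← mul_assoc b b' c']
        have h4 : sgn ((i + j) * k) = sgn (j * k) * sgn (i * k) := by
          rw [add_mul, sgn_add, mul_comm]
        rw [h4, add_sub_cancel_right]
        have h5 : c * (b' * c') = sgn (j * k) • (b' * (c * c')) := by
          rw [← mul_assoc, Q.env.B.gcomm' hb' hc, smul_mul_assoc, mul_assoc]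
        rw [h5, Q.env.inr.map_zsmul', X.smul_zsmul', sgn_smul_smul]
      · rw [mul_zero, map_zero, X.smul_zero']
      · intro e₁ e₂ _ _ h1 h2
        rw [mul_add, map_add, h1, h2, X.smul_add]
      · intro r e₁ _ h1
        rw [mul_smul_comm, map_smul, h1, X.smul_rsmul']
    · intro e
      rw [Q.env.ιJ_zero, zero_mul, map_zero, X.zero_smul']
    · intro y z _ _ hy hz e
      rw [Q.env.ιJ_add, add_mul, map_add, map_add, hy, hz, X.add_smul]
    · intro r y _ hy e
      rw [Q.env.ιJ_rsmul, smul_mul_assoc, map_smul, map_smul, hy, X.smul_rsmul]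
  -- H kills J·J
  have HJ2 : ∀ u v : Q.env.J.carrier, H (Q.env.ιJ u * Q.env.ιJ v) = 0 := by
    intro u v
    rw [Hmod u]
    exact hXJ _ _ (Q.env.mulB_iJ v)
  have Hker : ∀ x : Q.env.J.carrier, Q.pOm x = 0 → H (Q.env.ιJ x) = 0 := by
    intro x hx
    refine Submodule.span_induction ?_ ?_ ?_ ?_ ((Q.pOm_ker x).mp hx)
    · rintro y ⟨u, v, rfl⟩; exact HJ2 u v
    · exact map_zero H
    · intro y z _ _ hy hz; rw [map_add, hy, hz, add_zero]
    · intro r y _ hy; rw [map_smul, hy, smul_zero]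
  -- the induced map g on Ω
  obtain ⟨g, gp⟩ : ∃ g : Q.Ω.carrier → X.carrier,
      ∀ x, g (Q.pOm x) = H (Q.env.ιJ x) := by
    refine ⟨fun w => H (Q.env.ιJ (Function.surjInv Q.pOm_surj w)), fun x => ?_⟩
    have h1 : Q.pOm (Function.surjInv Q.pOm_surj (Q.pOm x) - x) = 0 := by
      rw [Q.pOm_sub, Function.surjInv_eq Q.pOm_surj, sub_self]
    have h2 := Hker _ h1
    rw [Q.env.ιJ_sub, map_sub, sub_eq_zero] at h2
    exact h2
  have gδ : ∀ b, g (Q.δbar b) = D b := by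
    intro b
    show g (Q.pOm (Q.env.δ b)) = D b
    rw [gp]
    have h1 : Q.env.ιJ (Q.env.δ b) = Q.env.inl.toFun b * Q.env.inr.toFun 1
        - Q.env.inl.toFun 1 * Q.env.inr.toFun b := by
      rw [Q.env.ιJ_δ, Q.env.inr.map_one, Q.env.inl.map_one, mul_one, one_mul]
    rw [h1, map_sub, hH, hH, D1, X.zero_smul', sub_zero, Q.env.inr.map_one, X.smul_one]
  have gadd : ∀ w w', g (w + w') = g w + g w' := by
    intro w w'
    obtain ⟨x, rfl⟩ := Q.pOm_surj w
    obtain ⟨y, rfl⟩ := Q.pOm_surj w'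
    rw [← Q.pOm_add, gp, gp, gp, Q.env.ιJ_add, map_add]
  have grs : ∀ (r : R) (w), g (r • w) = r • g w := by
    intro r w
    obtain ⟨x, rfl⟩ := Q.pOm_surj w
    rw [← Q.pOm_rsmul, gp, gp, Q.env.ιJ_rsmul, map_smul]
  have gsm : ∀ (w) (cb : Q.env.B.carrier),
      g (Q.Ω.smul w cb) = X.smul (g w) (Q.env.inr.toFun cb) := by
    intro w cb
    obtain ⟨x, rfl⟩ := Q.pOm_surj w
    have h1 : Q.Ω.smul (Q.pOm x) cb = Q.pOm (Q.env.J.smul x (Q.env.inr.toFun cb)) := by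
      rw [Q.pOm_smul, Q.env.mulB_inr]
    rw [h1, gp, gp, Q.env.ιJ_smul, Hmod]
  have gz : g 0 = 0 := by
    have h0 := gadd 0 0
    rw [add_zero] at h0
    exact left_eq_add.mp h0
  have ggr : ∀ (i : ℤ) (w), w ∈ Q.Ω.gr i → g w ∈ X.gr (i + n) := by
    intro i w hw
    refine Submodule.span_induction ?_ ?_ ?_ ?_ (Q.Ω_gr_span hw)
    · rintro y ⟨i', j', b, c, hb, hc, hij, rfl⟩
      rw [gsm, gδ]
      have h1 := X.smul_mem (Dgr i' b hb) (Q.env.inr.map_gr hc)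
      have heq : i' + n + j' = i + n := by omega
      rwa [heq] at h1
    · rw [gz]; exact Submodule.zero_mem _
    · intro y z _ _ hy hz; rw [gadd]; exact Submodule.add_mem _ hy hz
    · intro r y _ hy; rw [grs]; exact Submodule.smul_mem _ r hy
  exact ⟨g, ⟨gadd, grs, gsm, ggr⟩, fun b => (gδ b).symm⟩

end MainAux


end Aux

/-- Let `X` be a DG `Bᵉ`-module with `XJ = 0` (so `X` is a DG
`B`-module via `B ≅ Bᵉ/J`).  Then the map `g ↦ g ∘ δ̄` is an isomorphism
`Hom_B(Ω, X) ≅ Der_A(B, X)` of topological DG `B`-modules, where `Ω = J/J²` and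
`δ̄ : B → Ω` is induced by the universal derivation `δ`. -/
theorem der_iso_hom_omega {R : Type u} [CommRing R] (Q : OmegaSetup R)
    (X : DGMod Q.env.E)
    (hXJ : ∀ (x : X.carrier) (ee : Q.env.E.carrier),
      Q.env.mulB.toFun ee = 0 → X.smul x ee = 0) :
    -- g ↦ g ∘ δ̄ sends graded B-linear maps of degree n to A-derivations of degree n
    (∀ (n : ℤ) (g : Q.Ω.carrier → X.carrier),
      IsGLin Q.Ω (Q.env.toBMod X) n g → IsDer Q.env X n (fun b => g (Q.δbar b))) ∧
    (∀ g : Q.Ω.carrier → X.carrier, InSHom Q.Ω (Q.env.toBMod X) g →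
      InSDer Q.env X (fun b => g (Q.δbar b))) ∧
    -- injective
    (∀ g g' : Q.Ω.carrier → X.carrier, InSHom Q.Ω (Q.env.toBMod X) g →
      InSHom Q.Ω (Q.env.toBMod X) g' → (∀ b, g (Q.δbar b) = g' (Q.δbar b)) → g = g') ∧
    -- surjective
    (∀ D : Q.env.B.carrier → X.carrier, InSDer Q.env X D →
      ∃ g : Q.Ω.carrier → X.carrier, InSHom Q.Ω (Q.env.toBMod X) g ∧
        ∀ b, D b = g (Q.δbar b)) ∧
    -- intertwines the differentials: ∂^Der(g ∘ δ̄) = (∂^Hom g) ∘ δ̄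
    (∀ (n : ℤ) (g : Q.Ω.carrier → X.carrier), IsGLin Q.Ω (Q.env.toBMod X) n g →
      (fun b => X.d (g (Q.δbar b)) - sgn n • g (Q.δbar (Q.env.B.d b)))
        = (fun b => X.d (g (Q.δbar b)) - sgn n • g (Q.Ω.d (Q.δbar b)))) ∧
    -- continuous
    (∀ n : ℤ, ∃ m : ℤ, ∀ g : Q.Ω.carrier → X.carrier, InSHom Q.Ω (Q.env.toBMod X) g →
      (∀ k : ℤ, k ≤ m → ∀ w ∈ Q.Ω.gr k, g w = 0) →
      ∀ k : ℤ, k ≤ n → ∀ b ∈ Q.env.B.gr k, g (Q.δbar b) = 0) ∧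
    -- with continuous inverse
    (∀ n : ℤ, ∃ m : ℤ, ∀ g : Q.Ω.carrier → X.carrier, InSHom Q.Ω (Q.env.toBMod X) g →
      (∀ k : ℤ, k ≤ m → ∀ b ∈ Q.env.B.gr k, g (Q.δbar b) = 0) →
      ∀ k : ℤ, k ≤ n → ∀ w ∈ Q.Ω.gr k, g w = 0) := by
  refine ⟨?_, ?_, ?_, ?_, ?_, ?_, ?_⟩
  -- (1) glin ↦ der
  · exact fun n g hg => der_of_glin Q X hXJ n g hg
  -- (2) InSHom ↦ InSDer
  · rintro g ⟨s, gs, hgs, hsum⟩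
    exact ⟨s, fun n b => gs n (Q.δbar b),
      fun n hn => der_of_glin Q X hXJ n (gs n) (hgs n hn),
      fun b => hsum (Q.δbar b)⟩
  -- (3) injectivity
  · intro g g' hg hg' hagree
    obtain ⟨ga, grs, gsm⟩ := InSHom_props hg
    obtain ⟨ga', grs', gsm'⟩ := InSHom_props hg'
    have gz : g 0 = 0 := by
      have h0 := ga 0 0; rw [add_zero] at h0; exact left_eq_add.mp h0
    have gz' : g' 0 = 0 := by
      have h0 := ga' 0 0; rw [add_zero] at h0; exact left_eq_add.mp h0
    funext w
    refine Submodule.span_induction ?_ ?_ ?_ ?_ (Q.Ω_span w)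
    · rintro y ⟨i, j, b, c, hb, hc, rfl⟩
      rw [gsm, gsm', hagree]
    · rw [gz, gz']
    · intro y z _ _ hy hz
      rw [ga, ga', hy, hz]
    · intro r y _ hy
      rw [grs, grs', hy]
  -- (4) surjectivity
  · rintro D ⟨s, Df, hDf, hsum⟩
    have key : ∀ n : ℤ, ∃ gg : Q.Ω.carrier → X.carrier,
        n ∈ s → (IsGLin Q.Ω (Q.env.toBMod X) n gg ∧ ∀ b, Df n b = gg (Q.δbar b)) := by
      intro n
      by_cases hn : n ∈ s
      · obtain ⟨gg, h1, h2⟩ := exists_glin_of_der Q X hXJ n (Df n) (hDf n hn)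
        exact ⟨gg, fun _ => ⟨h1, h2⟩⟩
      · exact ⟨fun _ => 0, fun h => absurd h hn⟩
    choose gg hgg using key
    refine ⟨fun w => ∑ n ∈ s, gg n w,
      ⟨s, gg, fun n hn => (hgg n hn).1, fun w => rfl⟩, fun b => ?_⟩
    rw [hsum]
    exact Finset.sum_congr rfl fun n hn => (hgg n hn).2 b
  -- (5) intertwines differentials
  · intro n g hg
    funext b
    rw [Q.δbar_d]
  -- (6) continuity
  · intro n
    exact ⟨n, fun g hg h0 k hk b hb => h0 k hk _ (Q.δbar_gr hb)⟩
  -- (7) continuity of the inverse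
  · intro n
    refine ⟨n, fun g hg h0 k hk w hw => ?_⟩
    obtain ⟨ga, grs, gsm⟩ := InSHom_props hg
    have gz : g 0 = 0 := by
      have h1 := ga 0 0; rw [add_zero] at h1; exact left_eq_add.mp h1
    refine Submodule.span_induction ?_ ?_ ?_ ?_ (Q.Ω_gr_span hw)
    · rintro y ⟨i, j, b, c, hb, hc, hij, rfl⟩
      by_cases hj : j < 0
      · have hc0 : c = 0 := by
          have hbot := Q.env.B.nonneg j hj
          rw [hbot] at hc
          simpa using hc
        rw [hc0, Q.Ω.smul_zero', gz]
      · have hi : i ≤ n := by omega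
        rw [gsm, h0 i hi b hb]
        exact (Q.env.toBMod X).zero_smul' _
    · exact gz
    · intro y z _ _ hy hz
      rw [ga, hy, hz]; exact add_zero _
    · intro r y _ hy
      rw [grs, hy]; exact smul_zero _


end DG
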